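/- For μ₀,μ₁,μ₂,μ₃ ∈ ℂ, let Φ: ℂ² → ℂ⁴ be the polynomial map Φ(z₀,z₁) = (μ₀z₀³, μ₁z₀²z₁, μ₂z₀z₁², μ₃z₁³). Then the horizontality condition Φ*Θ = 0 — i.e. Φ₀(p)·DΦ₃(p)[v] − Φ₃(p)·DΦ₀(p)[v] + Φ₁(p)·DΦ₂(p)[v] − Φ₂(p)·DΦ₁(p)[v] = 0 for every p ∈ ℂ² and every direction v ∈ ℂ², where DΦ_j(p)[v] is the (complex) derivative of Φ_j at p in direction v — holds if and only if μ₀μ₃ = −μ₁μ₂/3. -/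

import Mathlib

noncomputable section

open ContinuousLinearMap in
private lemma fd_a (c : ℂ) (p v : ℂ × ℂ) :
    fderiv ℂ (fun q : ℂ × ℂ => c * q.1 ^ 3) p v = c * (3 * p.1 ^ 2 * v.1) := by
  have e : (fun q : ℂ × ℂ => c * q.1 ^ 3) = fun q : ℂ × ℂ => c * (q.1 * q.1 * q.1) := by
    funext q; ring
  have h1 : HasFDerivAt (fun q : ℂ × ℂ => q.1) (fst ℂ ℂ ℂ) p := hasFDerivAt_fst
  have h := ((h1.mul h1).mul h1).const_mul c
  rw [e, HasFDerivAt.fderiv (f := fun q : ℂ × ℂ => c * (q.1 * q.1 * q.1)) h]; simp; ring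

open ContinuousLinearMap in
private lemma fd_b (c : ℂ) (p v : ℂ × ℂ) :
    fderiv ℂ (fun q : ℂ × ℂ => c * q.2 ^ 3) p v = c * (3 * p.2 ^ 2 * v.2) := by
  have e : (fun q : ℂ × ℂ => c * q.2 ^ 3) = fun q : ℂ × ℂ => c * (q.2 * q.2 * q.2) := by
    funext q; ring
  have h2 : HasFDerivAt (fun q : ℂ × ℂ => q.2) (snd ℂ ℂ ℂ) p := hasFDerivAt_snd
  have h := ((h2.mul h2).mul h2).const_mul c
  rw [e, HasFDerivAt.fderiv (f := fun q : ℂ × ℂ => c * (q.2 * q.2 * q.2)) h]; simp; ring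

open ContinuousLinearMap in
private lemma fd_c (c : ℂ) (p v : ℂ × ℂ) :
    fderiv ℂ (fun q : ℂ × ℂ => c * q.1 * q.2 ^ 2) p v
      = c * (v.1 * p.2 ^ 2 + 2 * p.1 * p.2 * v.2) := by
  have e : (fun q : ℂ × ℂ => c * q.1 * q.2 ^ 2) = fun q : ℂ × ℂ => c * (q.1 * q.2 * q.2) := by
    funext q; ring
  have h1 : HasFDerivAt (fun q : ℂ × ℂ => q.1) (fst ℂ ℂ ℂ) p := hasFDerivAt_fst
  have h2 : HasFDerivAt (fun q : ℂ × ℂ => q.2) (snd ℂ ℂ ℂ) p := hasFDerivAt_snd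
  have h := ((h1.mul h2).mul h2).const_mul c
  rw [e, HasFDerivAt.fderiv (f := fun q : ℂ × ℂ => c * (q.1 * q.2 * q.2)) h]; simp; ring

open ContinuousLinearMap in
private lemma fd_d (c : ℂ) (p v : ℂ × ℂ) :
    fderiv ℂ (fun q : ℂ × ℂ => c * q.1 ^ 2 * q.2) p v
      = c * (2 * p.1 * v.1 * p.2 + p.1 ^ 2 * v.2) := by
  have e : (fun q : ℂ × ℂ => c * q.1 ^ 2 * q.2) = fun q : ℂ × ℂ => c * (q.1 * q.1 * q.2) := by
    funext q; ring
  have h1 : HasFDerivAt (fun q : ℂ × ℂ => q.1) (fst ℂ ℂ ℂ) p := hasFDerivAt_fst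
  have h2 : HasFDerivAt (fun q : ℂ × ℂ => q.2) (snd ℂ ℂ ℂ) p := hasFDerivAt_snd
  have h := ((h1.mul h1).mul h2).const_mul c
  rw [e, HasFDerivAt.fderiv (f := fun q : ℂ × ℂ => c * (q.1 * q.1 * q.2)) h]; simp; ring

/-- For Φ(z₀,z₁) = (μ₀z₀³, μ₁z₀²z₁, μ₂z₀z₁², μ₃z₁³), the horizontality condition
Φ*Θ = 0 (with Θ = w₀dw₃ − w₃dw₀ + w₁dw₂ − w₂dw₁) holds iff μ₀μ₃ = −μ₁μ₂/3. -/
theorem statement7 (μ0 μ1 μ2 μ3 : ℂ) :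
    (∀ p v : ℂ × ℂ,
      (μ0 * p.1 ^ 3) * fderiv ℂ (fun q : ℂ × ℂ => μ3 * q.2 ^ 3) p v -
        (μ3 * p.2 ^ 3) * fderiv ℂ (fun q : ℂ × ℂ => μ0 * q.1 ^ 3) p v +
        (μ1 * p.1 ^ 2 * p.2) * fderiv ℂ (fun q : ℂ × ℂ => μ2 * q.1 * q.2 ^ 2) p v -
        (μ2 * p.1 * p.2 ^ 2) * fderiv ℂ (fun q : ℂ × ℂ => μ1 * q.1 ^ 2 * q.2) p v = 0) ↔
    μ0 * μ3 = -(μ1 * μ2) / 3 := by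
  constructor
  · intro h
    have := h (1, 1) (0, 1)
    rw [fd_a, fd_b, fd_c, fd_d] at this
    simp at this
    linear_combination this / 3
  · intro h p v
    rw [fd_a, fd_b, fd_c, fd_d]
    linear_combination (3 * (p.1 ^ 3 * p.2 ^ 2 * v.2 - p.1 ^ 2 * p.2 ^ 3 * v.1)) * h
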